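/- Let x be a minimal deviation of T with support X. Then the root n belongs to X and the subgraph of T induced on X is connected; hence X is the vertex set of a subtree of T containing the root. -/
import Mathlib


open SimpleGraph Finset

/-- In the tree `T` rooted at `n`, `v` is a child of `u`. -/
def IsChild {V : Type} (T : SimpleGraph V) (n u v : V) : Prop :=
  T.Adj u v ∧ T.dist v n = T.dist u n + 1

/-- A `T`-codeword: a map on the variable nodes `P` (encoded as a map on all vertices
vanishing off `P`) such that, at every check node, the sum of the values of its
variable neighbors is `0` in `ZMod 2`. -/
def IsCodeword {V : Type} (T : SimpleGraph V) [Fintype V] [DecidableRel T.Adj]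
    (P : Set V) (x : V → ZMod 2) : Prop :=
  (∀ v, v ∉ P → x v = 0) ∧
  ∀ q, q ∉ P → ∑ p ∈ T.neighborFinset q, x p = 0

/-- `x` covers `y` : every variable node where `y` is `1` also has `x` equal to `1`. -/
def Covers {V : Type} (P : Set V) (x y : V → ZMod 2) : Prop :=
  ∀ p ∈ P, y p = 1 → x p = 1

/-- A minimal deviation: a `T`-codeword `x` with `x n = 1` such that the only nonzero
`T`-codeword covered by `x` is `x` itself. -/
def IsMinimalDeviation {V : Type} (T : SimpleGraph V) [Fintype V] [DecidableRel T.Adj]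
    (P : Set V) (n : V) (x : V → ZMod 2) : Prop :=
  IsCodeword T P x ∧ x n = 1 ∧
  ∀ y, IsCodeword T P y → Covers P x y → y ≠ 0 → y = x

/-- The support of a `T`-codeword `x`: the variable nodes `p` with `x p = 1` together
with all check nodes adjacent to at least one such variable node. -/
def Support {V : Type} (T : SimpleGraph V) (P : Set V) (x : V → ZMod 2) : Set V :=
  {v | (v ∈ P ∧ x v = 1) ∨ (v ∉ P ∧ ∃ p ∈ P, T.Adj v p ∧ x p = 1)}

/-- if `x` is a minimal deviation with support `X`, then the root `n`
belongs to `X` and the subgraph of `T` induced on `X` is connected; hence `X` is the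
vertex set of a subtree of `T` containing the root. -/
theorem minimal_deviation_support_connected {V : Type} [Fintype V]
    (T : SimpleGraph V) [DecidableRel T.Adj] (hT : T.IsTree)
    (P : Set V) (hbip : ∀ u v, T.Adj u v → (u ∈ P ↔ v ∉ P))
    (n : V) (hn : n ∈ P)
    (x : V → ZMod 2) (hx : IsMinimalDeviation T P n x) :
    n ∈ Support T P x ∧ (T.induce (Support T P x)).Connected ∧
      (T.induce (Support T P x)).IsTree := by
  classical
  obtain ⟨⟨hx0, hxq⟩, hxn, hmin⟩ := hx
  set X := Support T P x with hXdef
  have hnX : n ∈ X := Or.inl ⟨hn, hxn⟩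
  have h01 : ∀ a : ZMod 2, a = 0 ∨ a = 1 := by decide
  have hvarX : ∀ p, p ∈ P → x p = 1 → p ∈ X := fun p hp h1 => Or.inl ⟨hp, h1⟩
  have hchkX : ∀ q p, q ∉ P → T.Adj q p → x p = 1 → q ∈ X := by
    intro q p hq hadj h1
    have hpP : p ∈ P := by
      by_contra hpP
      exact hq ((hbip q p hadj).mpr hpP)
    exact Or.inr ⟨hq, p, hpP, hadj, h1⟩
  have hadjInduce : ∀ a b (ha : a ∈ X) (hb : b ∈ X), T.Adj a b →
      (T.induce X).Adj ⟨a, ha⟩ ⟨b, hb⟩ := fun a b ha hb h => h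
  let R : V → Prop := fun v => ∃ h : v ∈ X, (T.induce X).Reachable ⟨n, hnX⟩ ⟨v, h⟩
  have hRn : R n := ⟨hnX, Reachable.refl _⟩
  have hRstep : ∀ a b, R a → b ∈ X → T.Adj a b → R b := by
    rintro a b ⟨ha, hr⟩ hb hadj
    exact ⟨hb, hr.trans (hadjInduce a b ha hb hadj).reachable⟩
  let y : V → ZMod 2 := fun v => if v ∈ P ∧ x v = 1 ∧ R v then 1 else 0
  have hy1 : ∀ v, y v = 1 ↔ (v ∈ P ∧ x v = 1 ∧ R v) := by
    intro v
    by_cases h : v ∈ P ∧ x v = 1 ∧ R v <;> simp [y, h]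
  have hyc : IsCodeword T P y := by
    constructor
    · intro v hv
      simp only [y, ite_eq_right_iff]
      intro h; exact absurd h.1 hv
    · intro q hq
      by_cases hRq : R q
      · have heqn : ∀ p ∈ T.neighborFinset q, y p = x p := by
          intro p hp
          rw [mem_neighborFinset] at hp
          have hpP : p ∈ P := by
            by_contra hpP
            exact hq ((hbip q p hp).mpr hpP)
          rcases h01 (x p) with h0 | h1
          · have : ¬ (p ∈ P ∧ x p = 1 ∧ R p) := by
              rintro ⟨_, h1, _⟩; rw [h1] at h0; exact one_ne_zero h0
            simp [y, this, h0]
          · have hpX := hvarX p hpP h1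
            have hRp : R p := hRstep q p hRq hpX hp
            simp [y, hpP, h1, hRp]
        rw [Finset.sum_congr rfl heqn]
        exact hxq q hq
      · have heq0 : ∀ p ∈ T.neighborFinset q, y p = 0 := by
          intro p hp
          rw [mem_neighborFinset] at hp
          by_cases hc : p ∈ P ∧ x p = 1 ∧ R p
          · exfalso
            apply hRq
            have hqX := hchkX q p hq hp hc.2.1
            exact hRstep p q hc.2.2 hqX hp.symm
          · simp [y, hc]
        rw [Finset.sum_congr rfl heq0]
        simp
  have hcov : Covers P x y := by
    intro p hp h1
    exact ((hy1 p).mp h1).2.1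
  have hyn : y n = 1 := (hy1 n).mpr ⟨hn, hxn, hRn⟩
  have hyne : y ≠ 0 := by
    intro h
    rw [h] at hyn
    exact one_ne_zero hyn.symm
  have heq : y = x := hmin y hyc hcov hyne
  have hRall : ∀ v, v ∈ P → x v = 1 → R v := by
    intro v hv h1
    have : y v = 1 := by rw [heq]; exact h1
    exact ((hy1 v).mp this).2.2
  have hreach : ∀ v : X, (T.induce X).Reachable ⟨n, hnX⟩ v := by
    rintro ⟨v, hv⟩
    rcases hv with ⟨hvP, hv1⟩ | ⟨hvP, p, hpP, hadj, hp1⟩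
    · exact (hRall v hvP hv1).2
    · obtain ⟨hpX, hr⟩ := hRall p hpP hp1
      exact hr.trans (hadjInduce p v hpX (Or.inr ⟨hvP, p, hpP, hadj, hp1⟩) hadj.symm).reachable
  have hconn : (T.induce X).Connected := by
    haveI : Nonempty X := ⟨⟨n, hnX⟩⟩
    exact Connected.mk fun a b => (hreach a).symm.trans (hreach b)
  have hac : (T.induce X).IsAcyclic := by
    intro v c hc
    exact hT.IsAcyclic (c.map (SimpleGraph.Embedding.induce X).toHom)
      (hc.map Subtype.coe_injective)
  exact ⟨hnX, hconn, ⟨hconn, hac⟩⟩
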